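/- Let p be a prime, G a finite group, and H a normal subgroup of G. If a p-subgroup P ≤ H is p-centric in G and F_p(G)-radical, then P is p-centric in H and F_p(H)-radical. -/

import Mathlib

/-- A subgroup `P ≤ G` is `p`-centric in `G` if every element of `p`-power order in the
centralizer `C_G(P)` lies in `P`. -/
def IsPCentric (p : ℕ) {G : Type*} [Group G] (P : Subgroup G) : Prop :=
  ∀ g ∈ Subgroup.centralizer (P : Set G), (∃ n : ℕ, g ^ p ^ n = 1) → g ∈ P

/-- The subgroup `P ⬝ C_G(P)` of the normalizer `N_G(P)`, i.e. the kernel of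
`N_G(P) → Out_G(P)`. -/
def outKer {G : Type*} [Group G] (P : Subgroup G) : Subgroup (Subgroup.normalizer (P : Set G)) :=
  (P ⊔ Subgroup.centralizer (P : Set G)).subgroupOf (Subgroup.normalizer (P : Set G))

instance outKer_normal {G : Type*} [Group G] (P : Subgroup G) : (outKer P).Normal := by
  constructor
  intro n hn g
  rw [outKer, Subgroup.mem_subgroupOf] at hn ⊢
  have key : ∀ x : G, x ∈ (Subgroup.normalizer (P : Set G)) →
      ∀ y ∈ P ⊔ Subgroup.centralizer (P : Set G),
        x * y * x⁻¹ ∈ P ⊔ Subgroup.centralizer (P : Set G) := by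
    intro x hx y hy
    have hPle : P.map (MulAut.conj x).toMonoidHom
        ≤ P ⊔ Subgroup.centralizer (P : Set G) := by
      rintro _ ⟨y, hyP, rfl⟩
      exact Subgroup.mem_sup_left
        (by simpa using (Subgroup.mem_normalizer_iff.mp hx y).mp hyP)
    have hCle : (Subgroup.centralizer (P : Set G)).map (MulAut.conj x).toMonoidHom
        ≤ P ⊔ Subgroup.centralizer (P : Set G) := by
      rintro _ ⟨y, hyC, rfl⟩
      have hyC' : ∀ h ∈ P, h * y = y * h := fun h hh =>
        Subgroup.mem_centralizer_iff.mp hyC h hh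
      refine Subgroup.mem_sup_right (Subgroup.mem_centralizer_iff.mpr ?_)
      intro h hh
      have hh' : x⁻¹ * h * x ∈ P := by
        refine (Subgroup.mem_normalizer_iff.mp hx (x⁻¹ * h * x)).mpr ?_
        have : x * (x⁻¹ * h * x) * x⁻¹ = h := by group
        rw [this]
        exact hh
      have hcomm := hyC' _ hh'
      have : (MulAut.conj x).toMonoidHom y = x * y * x⁻¹ := by
        simp [MulAut.conj_apply]
      rw [this]
      calc h * (x * y * x⁻¹) = x * ((x⁻¹ * h * x) * y) * x⁻¹ := by group
        _ = x * (y * (x⁻¹ * h * x)) * x⁻¹ := by rw [hcomm]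
        _ = x * y * x⁻¹ * h := by group
    have hmap : (P ⊔ Subgroup.centralizer (P : Set G)).map (MulAut.conj x).toMonoidHom
        ≤ P ⊔ Subgroup.centralizer (P : Set G) := by
      rw [Subgroup.map_sup]
      exact sup_le hPle hCle
    have := hmap (Subgroup.mem_map_of_mem _ hy)
    simpa using this
  have := key (g : G) g.2 (n : G) hn
  simpa [mul_assoc] using this

/-- `Out_G(P) = N_G(P) / (P ⬝ C_G(P))`. -/
def OutG {G : Type*} [Group G] (P : Subgroup G) : Type _ :=
  (Subgroup.normalizer (P : Set G)) ⧸ outKer P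

instance {G : Type*} [Group G] (P : Subgroup G) : Group (OutG P) :=
  inferInstanceAs (Group ((Subgroup.normalizer (P : Set G)) ⧸ outKer P))

/-- A subgroup `P ≤ G` is `F_p(G)`-radical if `Out_G(P) = N_G(P)/(P ⬝ C_G(P))` has no
nontrivial normal `p`-subgroup. -/
def IsFpRadical (p : ℕ) {G : Type*} [Group G] (P : Subgroup G) : Prop :=
  ∀ K : Subgroup (OutG P), K.Normal → IsPGroup p K → K = ⊥


lemma myCentralizer_le_normalizer {G : Type*} [Group G] (P : Subgroup G) :
    Subgroup.centralizer (P : Set G) ≤ (Subgroup.normalizer (P : Set G)) := by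
  intro c hc
  rw [Subgroup.mem_normalizer_iff]
  intro x
  constructor
  · intro hx
    have h := Subgroup.mem_centralizer_iff.mp hc x hx
    have h2 : c * x * c⁻¹ = x := by rw [← h]; group
    rwa [h2]
  · intro hx
    have h := Subgroup.mem_centralizer_iff.mp hc _ hx
    have h2 : x = c * x * c⁻¹ := by
      have := h
      -- h : (c*x*c⁻¹) * c = c * (c*x*c⁻¹)
      have h3 : c * x = c * (c * x * c⁻¹) := by
        calc c * x = (c * x * c⁻¹) * c := by group
          _ = c * (c * x * c⁻¹) := h
      exact mul_left_cancel h3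
    rw [h2]; exact hx

lemma myMemSupCentralizer {G : Type*} [Group G] {P : Subgroup G} {h : G}
    (hmem : h ∈ P ⊔ Subgroup.centralizer (P : Set G)) :
    ∃ x ∈ P, ∃ c ∈ Subgroup.centralizer (P : Set G), h = x * c := by
  have hPN : P ≤ (Subgroup.normalizer (P : Set G)) := Subgroup.le_normalizer
  have hCN : Subgroup.centralizer (P : Set G) ≤ (Subgroup.normalizer (P : Set G)) := myCentralizer_le_normalizer P
  have hN : h ∈ (Subgroup.normalizer (P : Set G)) := (sup_le hPN hCN) hmem
  have hsub : (⟨h, hN⟩ : (Subgroup.normalizer (P : Set G))) ∈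
      (P ⊔ Subgroup.centralizer (P : Set G)).subgroupOf (Subgroup.normalizer (P : Set G)) :=
    Subgroup.mem_subgroupOf.mpr hmem
  rw [Subgroup.subgroupOf_sup hPN hCN] at hsub
  have hset := Subgroup.normal_mul (P.subgroupOf (Subgroup.normalizer (P : Set G)))
    ((Subgroup.centralizer (P : Set G)).subgroupOf (Subgroup.normalizer (P : Set G)))
  rw [← SetLike.mem_coe, hset] at hsub
  obtain ⟨x, hx, c, hcm, hxc⟩ := hsub
  refine ⟨(x : G), Subgroup.mem_subgroupOf.mp hx, (c : G), Subgroup.mem_subgroupOf.mp hcm, ?_⟩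
  have := congrArg Subtype.val hxc
  simpa using this.symm

lemma myIsPGroup_iSup {p : ℕ} {Γ : Type*} [Group Γ] {ι : Type*} [Fintype ι]
    (f : ι → Subgroup Γ) (h1 : ∀ i, IsPGroup p (f i)) (h2 : ∀ i, (f i).Normal) :
    IsPGroup p ↥(⨆ i, f i) := by
  rw [← Finset.sup_univ_eq_iSup]
  have key := Finset.sup_induction (s := Finset.univ) (f := f)
    (p := fun S : Subgroup Γ => IsPGroup p ↥S ∧ S.Normal)
    ⟨IsPGroup.of_bot, inferInstance⟩
    (fun a ha b hb => by
      haveI := hb.2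
      exact ⟨IsPGroup.to_sup_of_normal_right ha.1 hb.1, by haveI := ha.2; infer_instance⟩)
    (fun i _ => ⟨h1 i, h2 i⟩)
  exact key.1

lemma myCoe_mem_normalizer {G : Type*} [Group G] {H P : Subgroup G} (hPH : P ≤ H)
    (h : H) (hh : h ∈ (Subgroup.normalizer ((P.subgroupOf H : Subgroup H) : Set H))) : (h : G) ∈ (Subgroup.normalizer (P : Set G)) := by
  rw [Subgroup.mem_normalizer_iff] at hh ⊢
  intro x
  constructor
  · intro hx
    have hxH : x ∈ H := hPH hx
    have h1 : (⟨x, hxH⟩ : H) ∈ P.subgroupOf H := Subgroup.mem_subgroupOf.mpr hx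
    have h2 := (hh ⟨x, hxH⟩).mp h1
    have h3 := Subgroup.mem_subgroupOf.mp h2
    simpa using h3
  · intro hx
    have hxH : x ∈ H := by
      have hin : (h : G) * x * (h : G)⁻¹ ∈ H := hPH hx
      have : x = (h : G)⁻¹ * ((h : G) * x * (h : G)⁻¹) * (h : G) := by group
      rw [this]
      exact H.mul_mem (H.mul_mem (H.inv_mem h.2) hin) h.2
    have h1 : h * ⟨x, hxH⟩ * h⁻¹ ∈ P.subgroupOf H := by
      rw [Subgroup.mem_subgroupOf]
      simpa using hx
    have h2 := (hh ⟨x, hxH⟩).mpr h1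
    exact Subgroup.mem_subgroupOf.mp h2

lemma myMem_normalizer_subgroupOf {G : Type*} [Group G] {H P : Subgroup G}
    (g : H) (hg : (g : G) ∈ (Subgroup.normalizer (P : Set G))) : g ∈ (Subgroup.normalizer ((P.subgroupOf H : Subgroup H) : Set H)) := by
  rw [Subgroup.mem_normalizer_iff] at hg ⊢
  intro x
  simp only [Subgroup.mem_subgroupOf, Subgroup.coe_mul, InvMemClass.coe_inv]
  exact hg (x : G)

/-- The map `N_H(P∩H) → N_G(P)`. -/
def myNmap {G : Type*} [Group G] (H P : Subgroup G) (hPH : P ≤ H) :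
    (Subgroup.normalizer ((P.subgroupOf H : Subgroup H) : Set H)) →* (Subgroup.normalizer (P : Set G)) where
  toFun h := ⟨((h : H) : G), myCoe_mem_normalizer hPH (h : H) h.2⟩
  map_one' := rfl
  map_mul' _ _ := rfl

lemma myKerChar {G : Type*} [Group G] (H P : Subgroup G) (hPH : P ≤ H)
    (a : (Subgroup.normalizer ((P.subgroupOf H : Subgroup H) : Set H))) :
    ((a : H) : G) ∈ P ⊔ Subgroup.centralizer (P : Set G) ↔ a ∈ outKer (P.subgroupOf H) := by
  constructor
  · intro ha
    obtain ⟨x, hx, c, hcm, hxc⟩ := myMemSupCentralizer ha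
    have hxH : x ∈ H := hPH hx
    have hcH : c ∈ H := by
      have hce : c = x⁻¹ * ((a : H) : G) := by rw [hxc]; group
      rw [hce]; exact H.mul_mem (H.inv_mem hxH) (a : H).2
    rw [outKer, Subgroup.mem_subgroupOf]
    have hxm : (⟨x, hxH⟩ : H) ∈ P.subgroupOf H := Subgroup.mem_subgroupOf.mpr hx
    have hcm' : (⟨c, hcH⟩ : H) ∈
        Subgroup.centralizer ((P.subgroupOf H : Subgroup H) : Set H) := by
      rw [Subgroup.mem_centralizer_iff]
      intro y hy
      have hyP : (y : G) ∈ P := Subgroup.mem_subgroupOf.mp hy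
      have hcomm := Subgroup.mem_centralizer_iff.mp hcm (y : G) hyP
      exact Subtype.ext hcomm
    have hdec : (a : H) = ⟨x, hxH⟩ * ⟨c, hcH⟩ := Subtype.ext (by simpa using hxc)
    rw [hdec]
    exact mul_mem (Subgroup.mem_sup_left hxm) (Subgroup.mem_sup_right hcm')
  · intro ha
    rw [outKer, Subgroup.mem_subgroupOf] at ha
    have hmap : (P.subgroupOf H ⊔
        Subgroup.centralizer ((P.subgroupOf H : Subgroup H) : Set H)).map H.subtype ≤
        P ⊔ Subgroup.centralizer (P : Set G) := by
      rw [Subgroup.map_sup]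
      apply sup_le
      · rw [Subgroup.subgroupOf_map_subtype]
        exact le_trans inf_le_left le_sup_left
      · rintro _ ⟨c, hcm, rfl⟩
        apply Subgroup.mem_sup_right
        rw [Subgroup.mem_centralizer_iff]
        intro x hx
        have hxH : x ∈ H := hPH hx
        have hcomm := Subgroup.mem_centralizer_iff.mp hcm ⟨x, hxH⟩
          (Subgroup.mem_subgroupOf.mpr hx)
        exact congrArg Subtype.val hcomm
    exact hmap ⟨(a : H), ha, rfl⟩

theorem stmt_15 (p : ℕ) (hp : p.Prime) {G : Type*} [Group G] [Finite G]
    (H : Subgroup G) (hH : H.Normal) (P : Subgroup G) (hPH : P ≤ H)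
    (hP : IsPGroup p P) (hc : IsPCentric p P) (hr : IsFpRadical p P) :
    IsPCentric p (P.subgroupOf H) ∧ IsFpRadical p (P.subgroupOf H) := by
  constructor
  · -- p-centric in H
    intro g hg hpow
    obtain ⟨n, hn⟩ := hpow
    have hgC : (g : G) ∈ Subgroup.centralizer (P : Set G) := by
      rw [Subgroup.mem_centralizer_iff]
      intro x hx
      have hxH : x ∈ H := hPH hx
      have hcomm := Subgroup.mem_centralizer_iff.mp hg ⟨x, hxH⟩
        (Subgroup.mem_subgroupOf.mpr hx)
      exact congrArg Subtype.val hcomm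
    have hgP : (g : G) ∈ P := hc (g : G) hgC ⟨n, by
      have h1 := congrArg Subtype.val hn
      simpa using h1⟩
    exact Subgroup.mem_subgroupOf.mpr hgP
  · -- F_p(H)-radical
    intro K hKn hKp
    classical
    haveI : Finite (OutG P) := (inferInstance : Finite (Subgroup.normalizer (P : Set G) ⧸ outKer P))
    haveI := Fintype.ofFinite (OutG P)
    let f : (Subgroup.normalizer ((P.subgroupOf H : Subgroup H) : Set H)) →* OutG P :=
      (QuotientGroup.mk' (outKer P)).comp (myNmap H P hPH)
    have hfker : ∀ a : (Subgroup.normalizer ((P.subgroupOf H : Subgroup H) : Set H)), f a = 1 ↔ a ∈ outKer (P.subgroupOf H) := by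
      intro a
      have h1 : f a = 1 ↔ (myNmap H P hPH a) ∈ outKer P :=
        QuotientGroup.eq_one_iff (myNmap H P hPH a)
      rw [h1, outKer, Subgroup.mem_subgroupOf]
      exact myKerChar H P hPH a
    let ψ : OutG (P.subgroupOf H) →* OutG P :=
      QuotientGroup.lift (outKer (P.subgroupOf H)) f (fun a ha => (hfker a).mpr ha)
    have hψmk : ∀ a : (Subgroup.normalizer ((P.subgroupOf H : Subgroup H) : Set H)), ψ (QuotientGroup.mk a) = f a :=
      fun a => rfl
    have hinj : Function.Injective ψ := by
      rw [injective_iff_map_eq_one]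
      intro x hx
      obtain ⟨a, rfl⟩ := QuotientGroup.mk_surjective x
      rw [hψmk] at hx
      exact (QuotientGroup.eq_one_iff a).mpr ((hfker a).mp hx)
    set R : Subgroup (OutG P) := ψ.range with hRdef
    haveI hRn : R.Normal := by
      constructor
      intro n hn g
      obtain ⟨y, rfl⟩ := hn
      obtain ⟨a, rfl⟩ := QuotientGroup.mk_surjective y
      obtain ⟨b, rfl⟩ := QuotientGroup.mk_surjective g
      have hconjH : (b : G) * ((a : H) : G) * (b : G)⁻¹ ∈ H :=
        hH.conj_mem _ (a : H).2 _
      have hconjN : (b : G) * ((a : H) : G) * (b : G)⁻¹ ∈ (Subgroup.normalizer (P : Set G)) :=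
        (Subgroup.normalizer (P : Set G)).mul_mem ((Subgroup.normalizer (P : Set G)).mul_mem b.2
          (myCoe_mem_normalizer hPH (a : H) a.2)) ((Subgroup.normalizer (P : Set G)).inv_mem b.2)
      have ha' : (⟨(b : G) * ((a : H) : G) * (b : G)⁻¹, hconjH⟩ : H) ∈
          (Subgroup.normalizer ((P.subgroupOf H : Subgroup H) : Set H)) :=
        myMem_normalizer_subgroupOf _ hconjN
      refine ⟨QuotientGroup.mk (⟨⟨_, hconjH⟩, ha'⟩ : (Subgroup.normalizer ((P.subgroupOf H : Subgroup H) : Set H))), ?_⟩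
      rw [hψmk, hψmk]
      have h2 : f (⟨⟨_, hconjH⟩, ha'⟩ : (Subgroup.normalizer ((P.subgroupOf H : Subgroup H) : Set H))) =
          QuotientGroup.mk (⟨_, hconjN⟩ : (Subgroup.normalizer (P : Set G))) := rfl
      have h3 : f a = QuotientGroup.mk (myNmap H P hPH a) := rfl
      rw [h2, h3]
      rfl
    set ψK : Subgroup (OutG P) := K.map ψ with hψKdef
    have hψKle : ψK ≤ R := Subgroup.map_le_range ψ K
    have hψKp : IsPGroup p ψK := hKp.map ψ
    have hψKn : ∀ r ∈ R, ∀ k ∈ ψK, r * k * r⁻¹ ∈ ψK := by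
      intro r hr k hk
      obtain ⟨y, rfl⟩ := hr
      rw [hψKdef] at hk ⊢
      obtain ⟨k₀, hk₀, rfl⟩ := hk
      refine ⟨y * k₀ * y⁻¹, hKn.conj_mem k₀ hk₀ y, ?_⟩
      simp
    set C : OutG P → Subgroup (OutG P) :=
      fun g => ψK.map (MulAut.conj g).toMonoidHom with hCdef
    have hCg : ∀ g : OutG P, C g = ψK.map (MulAut.conj g).toMonoidHom := fun g => rfl
    have hCle : ∀ g, C g ≤ R := by
      intro g x hx
      rw [hCg] at hx
      obtain ⟨k, hk, rfl⟩ := hx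
      have h4 : (MulAut.conj g).toMonoidHom k = g * k * g⁻¹ := rfl
      rw [h4]
      exact hRn.conj_mem k (hψKle hk) g
    have hCp : ∀ g, IsPGroup p (C g) := fun g => hψKp.map _
    have hCn : ∀ g, ∀ r ∈ R, ∀ x ∈ C g, r * x * r⁻¹ ∈ C g := by
      intro g r hr x hx
      rw [hCg] at hx ⊢
      obtain ⟨k, hk, rfl⟩ := hx
      have hr' : g⁻¹ * r * g ∈ R := by
        have h5 := hRn.conj_mem r hr g⁻¹
        simpa using h5
      have hin : (g⁻¹ * r * g) * k * (g⁻¹ * r * g)⁻¹ ∈ ψK := hψKn _ hr' k hk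
      refine ⟨_, hin, ?_⟩
      have h6 : ∀ z, (MulAut.conj g).toMonoidHom z = g * z * g⁻¹ := fun z => rfl
      rw [h6, h6]
      group
    have hcomp : ∀ g i : OutG P,
        (C i).map (MulAut.conj g).toMonoidHom = C (g * i) := by
      intro g i
      rw [hCg, hCg, Subgroup.map_map]
      congr 1
      ext z
      show g * (i * z * i⁻¹) * g⁻¹ = (g * i) * z * (g * i)⁻¹
      group
    set N : Subgroup (OutG P) := ⨆ g, C g with hNdef
    have hNle : N ≤ R := iSup_le hCle
    have hψKleN : ψK ≤ N := by
      rw [hNdef]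
      refine le_trans ?_ (le_iSup C 1)
      intro k hk
      rw [hCg]
      exact ⟨k, hk, by simp⟩
    haveI hNn : N.Normal := by
      constructor
      intro n hn g
      rw [hNdef] at hn ⊢
      have hmem : g * n * g⁻¹ ∈ (⨆ g', C g').map (MulAut.conj g).toMonoidHom :=
        ⟨n, hn, rfl⟩
      rw [Subgroup.map_iSup] at hmem
      have hle : (⨆ i, (C i).map (MulAut.conj g).toMonoidHom) ≤ ⨆ i, C i := by
        refine iSup_le fun i => ?_
        rw [hcomp g i]
        exact le_iSup C (g * i)
      exact hle hmem
    set D : OutG P → Subgroup R := fun g => (C g).subgroupOf R with hDdef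
    have hDp : ∀ g, IsPGroup p (D g) := fun g => (hCp g).comap_subtype
    have hDn : ∀ g, (D g).Normal := by
      intro g
      constructor
      intro x hx r
      rw [hDdef, Subgroup.mem_subgroupOf] at hx ⊢
      have h7 := hCn g (r : OutG P) r.2 (x : OutG P) hx
      simpa using h7
    have hDsup : ⨆ g, D g = N.subgroupOf R := by
      apply Subgroup.map_injective R.subtype_injective
      calc (⨆ g, D g).map R.subtype = ⨆ g, (D g).map R.subtype :=
            Subgroup.map_iSup _ _
        _ = ⨆ g, C g := iSup_congr (fun g => by
            rw [hDdef, Subgroup.subgroupOf_map_subtype]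
            exact inf_eq_left.mpr (hCle g))
        _ = N := hNdef.symm
        _ = N ⊓ R := (inf_eq_left.mpr hNle).symm
        _ = (N.subgroupOf R).map R.subtype := (Subgroup.subgroupOf_map_subtype _ _).symm
    have hNsub : IsPGroup p (N.subgroupOf R) := by
      rw [← hDsup]
      exact myIsPGroup_iSup D hDp hDn
    have hNp : IsPGroup p N := hNsub.of_equiv (Subgroup.subgroupOfEquivOfLe hNle)
    have hNbot : N = ⊥ := hr N hNn hNp
    have hψKbot : ψK = ⊥ := le_bot_iff.mp (hNbot ▸ hψKleN)
    rw [eq_bot_iff]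
    intro k hk
    have h8 : ψ k ∈ ψK := Subgroup.mem_map_of_mem ψ hk
    rw [hψKbot, Subgroup.mem_bot] at h8
    rw [Subgroup.mem_bot]
    exact hinj (by rw [h8, map_one])
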